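/- Let f be a maximum (s,t)-flow of G and let e be an edge with f(e) = 1. Then the maximum (s,t)-flow value of G − e equals λ if and only if the residual graph G_f contains a directed cycle passing through the reversed edge e^rev; otherwise the maximum (s,t)-flow value of G − e equals λ − 1. -/

import Mathlib

open Finset

/-- A finite directed multigraph on vertex type `V` with edge type `E`:
each edge `e` has a source `src e` and a target `tgt e`. -/
structure Digraph' (V E : Type) where
  src : E → V
  tgt : E → V

namespace Digraph'

variable {V E : Type} [Fintype V] [DecidableEq V] [Fintype E] [DecidableEq E]

/-- `h : E → ℕ` satisfies flow conservation at every vertex other than `s` and `t`: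
the sum over incoming edges equals the sum over outgoing edges. -/
def Conserves (G : Digraph' V E) (s t : V) (h : E → ℕ) : Prop :=
  ∀ v : V, v ≠ s → v ≠ t →
    ∑ e ∈ univ.filter (fun e => G.tgt e = v), h e =
      ∑ e ∈ univ.filter (fun e => G.src e = v), h e

/-- The value of `h`: the net flow out of `s`. -/
def flowValue (G : Digraph' V E) (s : V) (h : E → ℕ) : ℤ :=
  (∑ e ∈ univ.filter (fun e => G.src e = s), (h e : ℤ)) -
    ∑ e ∈ univ.filter (fun e => G.tgt e = s), (h e : ℤ)

/-- An `(s,t)`-flow of a unit-capacity digraph: a `{0,1}`-valued function on edges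
satisfying flow conservation at every vertex other than `s` and `t`. -/
def IsFlow (G : Digraph' V E) (s t : V) (f : E → ℕ) : Prop :=
  (∀ e, f e ≤ 1) ∧ G.Conserves s t f

/-- One step along an edge not belonging to `F`. -/
def stepAvoid (G : Digraph' V E) (F : Finset E) (u v : V) : Prop :=
  ∃ e, e ∉ F ∧ G.src e = u ∧ G.tgt e = v

/-- Reachability by a directed path using no edge of `F`. -/
def ReachAvoid (G : Digraph' V E) (F : Finset E) : V → V → Prop :=
  Relation.ReflTransGen (G.stepAvoid F)

/-- `C` is an `(s,t)`-cut: after deleting the edges of `C` there is no directed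
path from `s` to `t`. -/
def IsCut (G : Digraph' V E) (s t : V) (C : Finset E) : Prop :=
  ¬ G.ReachAvoid C s t

/-- An `(s,t)`-min-cut: an `(s,t)`-cut of minimum cardinality. -/
def IsMinCut (G : Digraph' V E) (s t : V) (C : Finset E) : Prop :=
  G.IsCut s t C ∧ ∀ C' : Finset E, G.IsCut s t C' → C.card ≤ C'.card

/-- A minimal `(s,t)`-cut: no proper subset of it is an `(s,t)`-cut. -/
def IsMinimalCut (G : Digraph' V E) (s t : V) (C : Finset E) : Prop :=
  G.IsCut s t C ∧ ∀ C' : Finset E, C' ⊂ C → ¬ G.IsCut s t C'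

/-- An edge is critical if it belongs to some `(s,t)`-min-cut. -/
def Critical (G : Digraph' V E) (s t : V) (e : E) : Prop :=
  ∃ C : Finset E, G.IsMinCut s t C ∧ e ∈ C

/-- `m` is the maximum `(s,t)`-flow value of `G − F`, i.e. the largest value of an
`(s,t)`-flow of `G` vanishing on every edge of `F`. -/
def IsMaxFlowValue (G : Digraph' V E) (s t : V) (F : Finset E) (m : ℤ) : Prop :=
  (∃ f, G.IsFlow s t f ∧ (∀ e ∈ F, f e = 0) ∧ G.flowValue s f = m) ∧
    ∀ f, G.IsFlow s t f → (∀ e ∈ F, f e = 0) → G.flowValue s f ≤ m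

/-- The residual graph `G_f` of a `{0,1}`-flow `f`: each edge with `f e = 1`
is reversed, each edge with `f e = 0` is kept as is. -/
def residual (G : Digraph' V E) (f : E → ℕ) : Digraph' V E where
  src e := if f e = 1 then G.tgt e else G.src e
  tgt e := if f e = 1 then G.src e else G.tgt e

end Digraph'

set_option linter.unusedSectionVars false

namespace Digraph'

variable {V E : Type} [Fintype V] [DecidableEq V] [Fintype E] [DecidableEq E]

/-- net inflow minus outflow at a vertex. -/
def net (G : Digraph' V E) (h : E → ℕ) (v : V) : ℤ :=
  (∑ e ∈ univ.filter (fun e => G.tgt e = v), (h e : ℤ)) -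
    ∑ e ∈ univ.filter (fun e => G.src e = v), (h e : ℤ)

lemma flowValue_eq_neg_net (G : Digraph' V E) (s : V) (h : E → ℕ) :
    G.flowValue s h = - G.net h s := by
  simp [flowValue, net]

lemma conserves_iff (G : Digraph' V E) (s t : V) (h : E → ℕ) :
    G.Conserves s t h ↔ ∀ v, v ≠ s → v ≠ t → G.net h v = 0 := by
  unfold Conserves net
  refine forall_congr' fun v => forall_congr' fun hs => forall_congr' fun ht => ?_
  rw [sub_eq_zero]
  constructor
  · intro hh; exact_mod_cast hh
  · intro hh; exact_mod_cast hh

lemma sum_net (G : Digraph' V E) (h : E → ℕ) : ∑ v, G.net h v = 0 := by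
  unfold net
  rw [Finset.sum_sub_distrib]
  rw [Finset.sum_fiberwise univ G.tgt (fun e => (h e : ℤ)),
    Finset.sum_fiberwise univ G.src (fun e => (h e : ℤ)), sub_self]

lemma net_of_flow (G : Digraph' V E) {s t : V} (hst : s ≠ t) {h : E → ℕ}
    (hc : G.Conserves s t h) (v : V) :
    G.net h v = (if t = v then G.flowValue s h else 0) -
      (if s = v then G.flowValue s h else 0) := by
  have hnet := (G.conserves_iff s t h).mp hc
  have hs : G.net h s = - G.flowValue s h := by rw [flowValue_eq_neg_net]; ring
  have hsum := G.sum_net h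
  have hpair : ∑ v ∈ ({s, t} : Finset V), G.net h v = G.net h s + G.net h t :=
    Finset.sum_pair hst
  have hcompl : ∑ v ∈ ({s, t} : Finset V)ᶜ, G.net h v = 0 := by
    refine Finset.sum_eq_zero fun w hw => ?_
    simp only [Finset.mem_compl, Finset.mem_insert, Finset.mem_singleton] at hw
    exact hnet w (fun hh => hw (Or.inl hh)) (fun hh => hw (Or.inr hh))
  have htot : G.net h s + G.net h t = 0 := by
    have h2 := Finset.sum_add_sum_compl ({s, t} : Finset V) (G.net h)
    rw [hpair, hcompl, hsum] at h2
    linarith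
  by_cases hvs : s = v
  · subst hvs
    rw [if_neg (fun hh => hst hh.symm), if_pos rfl, hs]; ring
  · by_cases hvt : t = v
    · subst hvt
      rw [if_pos rfl, if_neg hvs]
      have hx : G.net h t = - G.net h s := by linarith
      rw [hx, hs]; ring
    · rw [if_neg hvt, if_neg hvs, hnet v (fun hh => hvs hh.symm) (fun hh => hvt hh.symm)]
      ring

end Digraph'
namespace Digraph'

variable {V E : Type} [Fintype V] [DecidableEq V] [Fintype E] [DecidableEq E]

lemma sum_update_int (A : Finset E) (f : E → ℕ) (e1 : E) (x : ℕ) :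
    ∑ e ∈ A, ((Function.update f e1 x e : ℕ) : ℤ)
      = (∑ e ∈ A, (f e : ℤ)) + (if e1 ∈ A then (x : ℤ) - f e1 else 0) := by
  have key : ∑ e ∈ A, (((Function.update f e1 x e : ℕ) : ℤ) - (f e : ℤ))
      = (if e1 ∈ A then (x : ℤ) - f e1 else 0) := by
    by_cases hA : e1 ∈ A
    · rw [if_pos hA, Finset.sum_eq_single_of_mem e1 hA]
      · simp
      · intro b _ hb; simp [Function.update_of_ne hb]
    · rw [if_neg hA]
      refine Finset.sum_eq_zero fun b hb => ?_
      have hbe : b ≠ e1 := fun hh => hA (hh ▸ hb)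
      simp [Function.update_of_ne hbe]
  rw [Finset.sum_sub_distrib] at key
  linarith

lemma net_update (G : Digraph' V E) (f : E → ℕ) (e1 : E) (hf1 : f e1 ≤ 1) (v : V) :
    G.net (Function.update f e1 (1 - f e1)) v
      = G.net f v + (if (G.residual f).tgt e1 = v then 1 else 0)
        - (if (G.residual f).src e1 = v then 1 else 0) := by
  unfold net
  rw [sum_update_int, sum_update_int]
  simp only [Finset.mem_filter, Finset.mem_univ, true_and]
  rcases Nat.le_one_iff_eq_zero_or_eq_one.mp hf1 with h0 | h1
  · by_cases h1 : G.tgt e1 = v <;> by_cases h2 : G.src e1 = v <;>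
      simp [residual, h0, h1, h2] <;> ring
  · by_cases hh1 : G.tgt e1 = v <;> by_cases hh2 : G.src e1 = v <;>
      simp [residual, h1, hh1, hh2] <;> ring

lemma reachAvoid_insert (G' : Digraph' V E) (F : Finset E) (e1 : E) {x b : V}
    (h : G'.ReachAvoid F x b) :
    G'.ReachAvoid (insert e1 F) x b ∨ G'.ReachAvoid (insert e1 F) (G'.tgt e1) b := by
  induction h using Relation.ReflTransGen.head_induction_on with
  | refl => exact Or.inl Relation.ReflTransGen.refl
  | head step rest ih =>
    obtain ⟨e2, he2F, hsrc, htgt⟩ := step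
    by_cases he : e2 = e1
    · subst he
      rcases ih with ih | ih
      · right; rwa [htgt]
      · exact Or.inr ih
    · rcases ih with ih | ih
      · exact Or.inl (Relation.ReflTransGen.head
          ⟨e2, by simp [he2F, he], hsrc, htgt⟩ ih)
      · exact Or.inr ih

lemma reachAvoid_mono (G' : Digraph' V E) {F F' : Finset E} (hFF : F ⊆ F') {a b : V}
    (h : G'.ReachAvoid F' a b) : G'.ReachAvoid F a b := by
  refine Relation.ReflTransGen.mono ?_ _ _ h
  rintro u v ⟨e', he', hs, ht⟩
  exact ⟨e', fun hc => he' (hFF hc), hs, ht⟩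

lemma reachAvoid_congr {f g : E → ℕ} (G : Digraph' V E) (F : Finset E)
    (hfg : ∀ e', e' ∉ F → f e' = g e') {a b : V}
    (h : (G.residual f).ReachAvoid F a b) : (G.residual g).ReachAvoid F a b := by
  refine Relation.ReflTransGen.mono ?_ _ _ h
  rintro u v ⟨e', he', hs, ht⟩
  have h1 : (G.residual f).src e' = (G.residual g).src e' := by
    simp [residual, hfg e' he']
  have h2 : (G.residual f).tgt e' = (G.residual g).tgt e' := by
    simp [residual, hfg e' he']
  exact ⟨e', he', h1 ▸ hs, h2 ▸ ht⟩

lemma augment (G : Digraph' V E) :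
    ∀ (n : ℕ) (F : Finset E) (f : E → ℕ) (a b : V),
      (univ \ F).card ≤ n → (∀ e', f e' ≤ 1) →
      (G.residual f).ReachAvoid F a b →
      ∃ g : E → ℕ, (∀ e', g e' ≤ 1) ∧ (∀ e' ∈ F, g e' = f e') ∧
        ∀ v, G.net g v = G.net f v + (if b = v then 1 else 0) - (if a = v then 1 else 0) := by
  intro n
  induction n with
  | zero =>
    intro F f a b hcard hf hreach
    rcases Relation.ReflTransGen.cases_head hreach with rfl | ⟨c, ⟨e1, he1, _, _⟩, _⟩
    · exact ⟨f, hf, fun _ _ => rfl, fun v => by ring⟩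
    · exfalso
      have hm : e1 ∈ univ \ F := by simp [he1]
      have := Finset.card_pos.mpr ⟨e1, hm⟩
      omega
  | succ n ih =>
    intro F f a b hcard hf hreach
    rcases Relation.ReflTransGen.cases_head hreach with rfl | ⟨c, hstep, hrest⟩
    · exact ⟨f, hf, fun _ _ => rfl, fun v => by ring⟩
    obtain ⟨e1, he1F, hsrc, htgt⟩ := hstep
    have hrest' : (G.residual f).ReachAvoid (insert e1 F) c b := by
      rcases reachAvoid_insert (G.residual f) F e1 hrest with h | h
      · exact h
      · rwa [htgt] at h
    set f1 := Function.update f e1 (1 - f e1) with hf1def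
    have hf1 : ∀ e', f1 e' ≤ 1 := by
      intro e'
      by_cases h : e' = e1
      · subst h; rw [hf1def, Function.update_self]; omega
      · rw [hf1def, Function.update_of_ne h]; exact hf e'
    have hrest'' : (G.residual f1).ReachAvoid (insert e1 F) c b := by
      refine reachAvoid_congr G (insert e1 F) ?_ hrest'
      intro e' he'
      have hne : e' ≠ e1 := fun hh => he' (by rw [hh]; exact Finset.mem_insert_self e1 F)
      rw [hf1def, Function.update_of_ne hne]
    have hcard' : (univ \ insert e1 F).card ≤ n := by
      have hss : univ \ insert e1 F ⊂ univ \ F := by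
        rw [Finset.ssubset_iff_of_subset
          (Finset.sdiff_subset_sdiff (Finset.Subset.refl _) (Finset.subset_insert _ _))]
        exact ⟨e1, by simp [he1F], by simp⟩
      have := Finset.card_lt_card hss
      omega
    obtain ⟨g, hg1, hg2, hg3⟩ := ih (insert e1 F) f1 c b hcard' hf1 hrest''
    refine ⟨g, hg1, ?_, ?_⟩
    · intro e' he'
      rw [hg2 e' (Finset.mem_insert_of_mem he'),
        hf1def, Function.update_of_ne (fun hh => he1F (by rw [← hh]; exact he'))]
    · intro v
      rw [hg3 v, net_update G f e1 (hf e1) v, hsrc, htgt]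
      ring

end Digraph'
namespace Digraph'

variable {V E : Type} [Fintype V] [DecidableEq V] [Fintype E] [DecidableEq E]

noncomputable def reachSet (G' : Digraph' V E) (S : Finset E) (a : V) : Finset V :=
  @Finset.filter _ (fun v => G'.ReachAvoid (univ \ S) a v) (Classical.decPred _) univ

lemma mem_reachSet {G' : Digraph' V E} {S : Finset E} {a v : V} :
    v ∈ reachSet G' S a ↔ G'.ReachAvoid (univ \ S) a v := by
  classical
  simp [reachSet]

lemma reachSet_self (G' : Digraph' V E) (S : Finset E) (a : V) :
    a ∈ reachSet G' S a := mem_reachSet.mpr Relation.ReflTransGen.refl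

lemma reachSet_closed {G' : Digraph' V E} {S : Finset E} {a : V} {e' : E}
    (he' : e' ∈ S) (h : G'.src e' ∈ reachSet G' S a) :
    G'.tgt e' ∈ reachSet G' S a :=
  mem_reachSet.mpr ((mem_reachSet.mp h).tail ⟨e', by simp [he'], rfl, rfl⟩)

lemma reach_card (G' : Digraph' V E) (S : Finset E) (a : V) :
    (S.filter (fun e' => G'.src e' ∈ reachSet G' S a)).card
      ≤ (S.filter (fun e' => G'.tgt e' ∈ reachSet G' S a)).card := by
  apply Finset.card_le_card
  intro e' he'
  rw [Finset.mem_filter] at *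
  exact ⟨he'.1, reachSet_closed he'.1 he'.2⟩

lemma card_filter_mem (S : Finset E) (R : Finset V) (φ : E → V) :
    (S.filter (fun e' => φ e' ∈ R)).card = ∑ v ∈ R, (S.filter (fun e' => φ e' = v)).card := by
  rw [Finset.card_eq_sum_card_fiberwise
    (f := φ) (s := S.filter (fun e' => φ e' ∈ R)) (t := R) (fun x hx => (Finset.mem_filter.mp hx).2)]
  refine Finset.sum_congr rfl fun v hv => ?_
  congr 1
  ext e'
  simp only [Finset.mem_filter]
  constructor
  · rintro ⟨⟨h1, _⟩, h3⟩; exact ⟨h1, h3⟩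
  · rintro ⟨h1, h3⟩; exact ⟨⟨h1, h3 ▸ hv⟩, h3⟩

lemma reach_sum (G' : Digraph' V E) (S : Finset E) (a : V) :
    0 ≤ ∑ v ∈ reachSet G' S a,
      (((S.filter (fun e' => G'.tgt e' = v)).card : ℤ)
        - ((S.filter (fun e' => G'.src e' = v)).card : ℤ)) := by
  have h3 : ((S.filter (fun e' => G'.src e' ∈ reachSet G' S a)).card : ℤ)
      ≤ ((S.filter (fun e' => G'.tgt e' ∈ reachSet G' S a)).card : ℤ) := by
    exact_mod_cast reach_card G' S a
  rw [card_filter_mem S (reachSet G' S a) G'.src,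
    card_filter_mem S (reachSet G' S a) G'.tgt] at h3
  push_cast at h3
  rw [Finset.sum_sub_distrib]
  linarith

/-- the support of a `{0,1}`-valued function. -/
def suppF (p : E → ℕ) : Finset E := univ.filter (fun e' => p e' = 1)

lemma count_supp (G : Digraph' V E) (p : E → ℕ) (hp : ∀ e', p e' ≤ 1) (v : V) :
    (((suppF p).filter (fun e' => (G.residual p).tgt e' = v)).card : ℤ)
      - (((suppF p).filter (fun e' => (G.residual p).src e' = v)).card : ℤ)
      = - G.net p v := by
  unfold net suppF
  rw [Finset.filter_filter, Finset.filter_filter]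
  rw [← Finset.sum_boole (p := fun e' => p e' = 1 ∧ (G.residual p).tgt e' = v),
    ← Finset.sum_boole (p := fun e' => p e' = 1 ∧ (G.residual p).src e' = v)]
  rw [Finset.sum_filter, Finset.sum_filter, ← Finset.sum_sub_distrib, neg_sub,
    ← Finset.sum_sub_distrib]
  refine Finset.sum_congr rfl fun e' _ => ?_
  rcases Nat.le_one_iff_eq_zero_or_eq_one.mp (hp e') with h | h <;>
    by_cases h1 : G.src e' = v <;> by_cases h2 : G.tgt e' = v <;>
      simp [residual, h, h1, h2]

lemma reach_sum_net (G : Digraph' V E) (p : E → ℕ) (hp : ∀ e', p e' ≤ 1) (a : V) :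
    ∑ v ∈ reachSet (G.residual p) (suppF p) a, G.net p v ≤ 0 := by
  have h := reach_sum (G.residual p) (suppF p) a
  have h2 : ∑ v ∈ reachSet (G.residual p) (suppF p) a, G.net p v
      = - ∑ v ∈ reachSet (G.residual p) (suppF p) a,
          ((((suppF p).filter (fun e' => (G.residual p).tgt e' = v)).card : ℤ)
            - (((suppF p).filter (fun e' => (G.residual p).src e' = v)).card : ℤ)) := by
    rw [← Finset.sum_neg_distrib]
    refine Finset.sum_congr rfl fun v _ => ?_
    have := count_supp G p hp v
    linarith
  linarith

end Digraph'
namespace Digraph'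

variable {V E : Type} [Fintype V] [DecidableEq V] [Fintype E] [DecidableEq E]

lemma count_diff (G : Digraph' V E) (f g : E → ℕ) (hf : ∀ e', f e' ≤ 1)
    (hg : ∀ e', g e' ≤ 1) (v : V) :
    ((((univ.filter (fun e' => ¬ (f e' = g e'))).filter
        (fun e' => (G.residual f).tgt e' = v)).card : ℤ)
      - (((univ.filter (fun e' => ¬ (f e' = g e'))).filter
        (fun e' => (G.residual f).src e' = v)).card : ℤ))
      = G.net g v - G.net f v := by
  unfold net
  rw [Finset.filter_filter, Finset.filter_filter]
  rw [← Finset.sum_boole (p := fun e' => ¬ (f e' = g e') ∧ (G.residual f).tgt e' = v),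
    ← Finset.sum_boole (p := fun e' => ¬ (f e' = g e') ∧ (G.residual f).src e' = v)]
  rw [Finset.sum_filter, Finset.sum_filter, Finset.sum_filter, Finset.sum_filter]
  rw [← Finset.sum_sub_distrib, ← Finset.sum_sub_distrib, ← Finset.sum_sub_distrib,
    ← Finset.sum_sub_distrib]
  refine Finset.sum_congr rfl fun e' _ => ?_
  rcases Nat.le_one_iff_eq_zero_or_eq_one.mp (hf e') with h | h <;>
    rcases Nat.le_one_iff_eq_zero_or_eq_one.mp (hg e') with h' | h' <;>
      by_cases h1 : G.src e' = v <;> by_cases h2 : G.tgt e' = v <;>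
        simp [residual, h, h', h1, h2]

lemma card_erase_filter (S : Finset E) {e : E} (he : e ∈ S) (p : E → Prop)
    [DecidablePred p] :
    ((((S.filter p).erase e).card : ℤ)) = ((S.filter p).card : ℤ) - (if p e then 1 else 0) := by
  by_cases hp : p e
  · rw [if_pos hp, Finset.card_erase_of_mem (Finset.mem_filter.mpr ⟨he, hp⟩)]
    have : 0 < (S.filter p).card := Finset.card_pos.mpr ⟨e, Finset.mem_filter.mpr ⟨he, hp⟩⟩
    push_cast
    omega
  · rw [if_neg hp, Finset.erase_eq_of_notMem (fun hc => hp (Finset.mem_filter.mp hc).2)]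
    ring

lemma reach_of_flow_eq (G : Digraph' V E) {s t : V} (hst : s ≠ t) {f g : E → ℕ}
    (hf : G.IsFlow s t f) (hg : G.IsFlow s t g)
    (hval : G.flowValue s g = G.flowValue s f)
    {e : E} (hfe : f e = 1) (hge : g e = 0) :
    (G.residual f).ReachAvoid {e} (G.src e) (G.tgt e) := by
  classical
  set S : Finset E := univ.filter (fun e' => ¬ (f e' = g e')) with hS
  have heS : e ∈ S := by
    rw [hS, Finset.mem_filter]
    exact ⟨mem_univ e, by omega⟩
  set S' : Finset E := S.erase e with hS'
  set R := reachSet (G.residual f) S' (G.src e) with hR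
  have htgte : (G.residual f).tgt e = G.src e := by simp [residual, hfe]
  have hsrce : (G.residual f).src e = G.tgt e := by simp [residual, hfe]
  have haR : G.src e ∈ R := reachSet_self _ _ _
  have h0 := reach_sum (G.residual f) S' (G.src e)
  have hnetfg : ∀ v, G.net g v - G.net f v = 0 := by
    intro v
    rw [net_of_flow G hst hf.2 v, net_of_flow G hst hg.2 v, hval]
    ring
  have hper : ∀ v, (((S'.filter (fun e' => (G.residual f).tgt e' = v)).card : ℤ)
      - ((S'.filter (fun e' => (G.residual f).src e' = v)).card : ℤ))
      = (if (G.residual f).src e = v then 1 else 0)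
        - (if (G.residual f).tgt e = v then 1 else 0) := by
    intro v
    rw [hS', Finset.filter_erase, Finset.filter_erase,
      card_erase_filter S heS _, card_erase_filter S heS _]
    have := count_diff G f g hf.1 hg.1 v
    rw [← hS] at this
    linarith [hnetfg v]
  have h1 : (0:ℤ) ≤ ∑ v ∈ R, ((if (G.residual f).src e = v then (1:ℤ) else 0)
      - (if (G.residual f).tgt e = v then 1 else 0)) :=
    le_trans h0 (le_of_eq (Finset.sum_congr rfl fun v _ => hper v))
  rw [Finset.sum_sub_distrib, Finset.sum_ite_eq, Finset.sum_ite_eq, htgte, hsrce] at h1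
  rw [if_pos haR] at h1
  by_cases hb : G.tgt e ∈ R
  · have hreach := mem_reachSet.mp hb
    refine reachAvoid_mono (G.residual f) ?_ hreach
    intro x hx
    rw [Finset.mem_singleton] at hx
    subst hx
    simp [hS']
  · rw [if_neg hb] at h1
    norm_num at h1

end Digraph'
namespace Digraph'

variable {V E : Type} [Fintype V] [DecidableEq V] [Fintype E] [DecidableEq E]

lemma exists_flow_of_reach (G : Digraph' V E) (s t : V) (f : E → ℕ)
    (hf : G.IsFlow s t f) (e : E) (hfe : f e = 1)
    (hreach : (G.residual f).ReachAvoid {e} (G.src e) (G.tgt e)) :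
    ∃ g, G.IsFlow s t g ∧ g e = 0 ∧ G.flowValue s g = G.flowValue s f := by
  obtain ⟨g1, hg1b, hg1F, hg1net⟩ := augment G (univ \ ({e} : Finset E)).card {e} f
    (G.src e) (G.tgt e) (le_refl _) hf.1 hreach
  have hg1e : g1 e = 1 := by rw [hg1F e (Finset.mem_singleton_self e), hfe]
  set g := Function.update g1 e (1 - g1 e) with hgdef
  have hge : g e = 0 := by rw [hgdef, Function.update_self, hg1e]
  have hgb : ∀ e', g e' ≤ 1 := by
    intro e'
    by_cases h : e' = e
    · subst h; omega
    · rw [hgdef, Function.update_of_ne h]; exact hg1b e'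
  have hnet : ∀ v, G.net g v = G.net f v := by
    intro v
    rw [hgdef, net_update G g1 e (hg1b e) v, hg1net v]
    have h1 : (G.residual g1).tgt e = G.src e := by simp [residual, hg1e]
    have h2 : (G.residual g1).src e = G.tgt e := by simp [residual, hg1e]
    rw [h1, h2]
    ring
  refine ⟨g, ⟨hgb, ?_⟩, hge, ?_⟩
  · rw [conserves_iff]
    intro v hvs hvt
    rw [hnet v]
    exact (G.conserves_iff s t f).mp hf.2 v hvs hvt
  · rw [flowValue_eq_neg_net, flowValue_eq_neg_net, hnet s]

lemma exists_flow_of_not_reach (G : Digraph' V E) {s t : V} (hst : s ≠ t)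
    {f : E → ℕ} (hf : G.IsFlow s t f) {e : E} (hfe : f e = 1)
    (hpos : 0 ≤ G.flowValue s f)
    (hnreach : ¬ (G.residual f).ReachAvoid {e} (G.src e) (G.tgt e)) :
    ∃ h, G.IsFlow s t h ∧ h e = 0 ∧ G.flowValue s h = G.flowValue s f - 1 := by
  classical
  set lam := G.flowValue s f with hlam
  have hnetf : ∀ v, G.net f v = (if t = v then lam else 0) - (if s = v then lam else 0) :=
    net_of_flow G hst hf.2
  set f' := Function.update f e (1 - f e) with hf'def
  have hf'e : f' e = 0 := by rw [hf'def, Function.update_self, hfe]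
  have hf'b : ∀ e', f' e' ≤ 1 := by
    intro e'
    by_cases h : e' = e
    · subst h; omega
    · rw [hf'def, Function.update_of_ne h]; exact hf.1 e'
  have hf'net : ∀ v, G.net f' v
      = G.net f v + (if G.src e = v then 1 else 0) - (if G.tgt e = v then 1 else 0) := by
    intro v
    rw [hf'def, net_update G f e (hf.1 e) v]
    have h1 : (G.residual f).tgt e = G.src e := by simp [residual, hfe]
    have h2 : (G.residual f).src e = G.tgt e := by simp [residual, hfe]
    rw [h1, h2]
  have hsub1 : ({e} : Finset E) ⊆ univ \ suppF f' := by
    intro x hx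
    rw [Finset.mem_singleton] at hx
    subst hx
    simp [suppF, hf'e]
  have hf'f : ∀ e', e' ∉ ({e} : Finset E) → f' e' = f e' := by
    intro e' he'
    rw [Finset.mem_singleton] at he'
    rw [hf'def, Function.update_of_ne he']
  -- Reach 1
  set R := reachSet (G.residual f') (suppF f') (G.src e) with hRdef
  have haR : G.src e ∈ R := reachSet_self _ _ _
  have hsum := reach_sum_net G f' hf'b (G.src e)
  rw [← hRdef] at hsum
  have hsum2 : ∑ v ∈ R, G.net f' v
      = ((if t ∈ R then lam else 0) - (if s ∈ R then lam else 0)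
          + (if G.src e ∈ R then 1 else 0)) - (if G.tgt e ∈ R then 1 else 0) := by
    have hcong : ∀ v ∈ R, G.net f' v
        = ((if t = v then lam else 0) - (if s = v then lam else 0)
            + (if G.src e = v then (1:ℤ) else 0)) - (if G.tgt e = v then 1 else 0) := by
      intro v _
      rw [hf'net v, hnetf v]
    rw [Finset.sum_congr rfl hcong, Finset.sum_sub_distrib, Finset.sum_add_distrib,
      Finset.sum_sub_distrib, Finset.sum_ite_eq, Finset.sum_ite_eq, Finset.sum_ite_eq,
      Finset.sum_ite_eq]
  by_cases hbR : G.tgt e ∈ R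
  · exfalso
    exact hnreach (reachAvoid_congr G {e} hf'f
      (reachAvoid_mono (G.residual f') hsub1 (mem_reachSet.mp hbR)))
  have hsR : s ∈ R := by
    by_cases hs : s ∈ R
    · exact hs
    exfalso
    rw [if_pos haR, if_neg hbR, if_neg hs] at hsum2
    by_cases ht : t ∈ R <;> rw [hsum2] at hsum <;> simp [ht] at hsum <;> try linarith
  have hlam1 : 1 ≤ lam := by
    rw [if_pos haR, if_neg hbR, if_pos hsR] at hsum2
    by_cases ht : t ∈ R <;> rw [hsum2] at hsum <;> simp [ht] at hsum <;> try linarith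
  have reach1 : (G.residual f').ReachAvoid {e} (G.src e) s :=
    reachAvoid_mono (G.residual f') hsub1 (mem_reachSet.mp hsR)
  obtain ⟨f'', hb'', hF'', hnet''⟩ := augment G (univ \ ({e} : Finset E)).card {e} f'
    (G.src e) s (le_refl _) hf'b reach1
  have hf''e : f'' e = 0 := (hF'' e (Finset.mem_singleton_self e)).trans hf'e
  have hnetf'' : ∀ v, G.net f'' v
      = G.net f v + (if s = v then 1 else 0) - (if G.tgt e = v then 1 else 0) := by
    intro v
    rw [hnet'' v, hf'net v]
    ring
  -- Reach 2
  set R2 := reachSet (G.residual f'') (suppF f'') t with hR2def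
  have htR2 : t ∈ R2 := reachSet_self _ _ _
  have hsumB := reach_sum_net G f'' hb'' t
  rw [← hR2def] at hsumB
  have hsumB2 : ∑ v ∈ R2, G.net f'' v
      = ((if t ∈ R2 then lam else 0) - (if s ∈ R2 then lam else 0)
          + (if s ∈ R2 then 1 else 0)) - (if G.tgt e ∈ R2 then 1 else 0) := by
    have hcong : ∀ v ∈ R2, G.net f'' v
        = ((if t = v then lam else 0) - (if s = v then lam else 0)
            + (if s = v then (1:ℤ) else 0)) - (if G.tgt e = v then 1 else 0) := by
      intro v _
      rw [hnetf'' v, hnetf v]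
    rw [Finset.sum_congr rfl hcong, Finset.sum_sub_distrib, Finset.sum_add_distrib,
      Finset.sum_sub_distrib, Finset.sum_ite_eq, Finset.sum_ite_eq, Finset.sum_ite_eq,
      Finset.sum_ite_eq]
  have hbR2 : G.tgt e ∈ R2 := by
    by_cases hb : G.tgt e ∈ R2
    · exact hb
    exfalso
    rw [if_pos htR2, if_neg hb] at hsumB2
    by_cases hs2 : s ∈ R2 <;> rw [hsumB2] at hsumB <;> simp [hs2] at hsumB <;> try linarith
  have hsub2 : ({e} : Finset E) ⊆ univ \ suppF f'' := by
    intro x hx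
    rw [Finset.mem_singleton] at hx
    subst hx
    simp [suppF, hf''e]
  have reach2 : (G.residual f'').ReachAvoid {e} t (G.tgt e) :=
    reachAvoid_mono (G.residual f'') hsub2 (mem_reachSet.mp hbR2)
  obtain ⟨h, hbh, hFh, hneth⟩ := augment G (univ \ ({e} : Finset E)).card {e} f''
    t (G.tgt e) (le_refl _) hb'' reach2
  have hhe : h e = 0 := (hFh e (Finset.mem_singleton_self e)).trans hf''e
  have hneth' : ∀ v, G.net h v
      = (if t = v then lam - 1 else 0) - (if s = v then lam - 1 else 0) := by
    intro v
    rw [hneth v, hnetf'' v, hnetf v]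
    by_cases h1 : t = v <;> by_cases h2 : s = v <;> simp [h1, h2] <;> ring
  refine ⟨h, ⟨hbh, ?_⟩, hhe, ?_⟩
  · rw [conserves_iff]
    intro v hvs hvt
    rw [hneth' v, if_neg (fun hh => hvt hh.symm), if_neg (fun hh => hvs hh.symm)]
    ring
  · rw [flowValue_eq_neg_net, hneth' s, if_neg (fun hh => hst hh.symm), if_pos rfl]
    ring

end Digraph'


/-- Let `f` be a maximum `(s,t)`-flow of `G` and `e` an edge with
`f e = 1`. Then the maximum `(s,t)`-flow value of `G − e` equals `λ` iff the residual
graph `G_f` contains a directed cycle through the reversed edge `e^rev` (i.e. there is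
a directed path in `G_f`, avoiding the residual copy of `e`, from the head `G.src e`
of `e^rev` back to its tail `G.tgt e`); otherwise it equals `λ − 1`. -/
theorem stmt11 {V E : Type} [Fintype V] [DecidableEq V] [Fintype E] [DecidableEq E]
    (G : Digraph' V E) (s t : V) (hst : s ≠ t)
    (lam : ℕ) (hmax : G.IsMaxFlowValue s t ∅ lam)
    (f : E → ℕ) (hf : G.IsFlow s t f) (hval : G.flowValue s f = lam)
    (e : E) (he : f e = 1) :
    (G.IsMaxFlowValue s t {e} lam ↔
      (G.residual f).ReachAvoid {e} (G.src e) (G.tgt e)) ∧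
    (¬ (G.residual f).ReachAvoid {e} (G.src e) (G.tgt e) →
      G.IsMaxFlowValue s t {e} ((lam : ℤ) - 1)) := by
  classical
  have hpos : (0:ℤ) ≤ G.flowValue s f := by
    rw [hval]; exact Int.natCast_nonneg lam
  constructor
  · constructor
    · rintro ⟨⟨g, hgflow, hg0, hgval⟩, -⟩
      exact Digraph'.reach_of_flow_eq G hst hf hgflow (by rw [hgval, hval]) he
        (hg0 e (Finset.mem_singleton_self e))
    · intro hreach
      obtain ⟨g, hgflow, hge, hgval⟩ :=
        Digraph'.exists_flow_of_reach G s t f hf e he hreach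
      refine ⟨⟨g, hgflow, ?_, by rw [hgval, hval]⟩, ?_⟩
      · intro e' he'
        rw [Finset.mem_singleton] at he'
        subst he'
        exact hge
      · intro f0 hf0 _
        exact hmax.2 f0 hf0 (fun e' he' => absurd he' (Finset.notMem_empty e'))
  · intro hnreach
    obtain ⟨h, hhflow, hhe, hhval⟩ :=
      Digraph'.exists_flow_of_not_reach G hst hf he hpos hnreach
    refine ⟨⟨h, hhflow, ?_, by rw [hhval, hval]⟩, ?_⟩
    · intro e' he'
      rw [Finset.mem_singleton] at he'
      subst he'
      exact hhe
    · intro f0 hf0 hf00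
      have h1 : G.flowValue s f0 ≤ lam :=
        hmax.2 f0 hf0 (fun e' he' => absurd he' (Finset.notMem_empty e'))
      have h2 : G.flowValue s f0 ≠ lam := by
        intro heq
        exact hnreach (Digraph'.reach_of_flow_eq G hst hf hf0 (by rw [heq, hval]) he
          (hf00 e (Finset.mem_singleton_self e)))
      omega
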